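/- Let R be an isoartinian commutative ring (every descending chain of ideals I₁ ⊇ I₂ ⊇ ⋯ eventually has Iₙ ≅ Iₙ₊₁ ≅ ⋯ as R-modules). Then every regular ideal of R is principal and generated by a regular element. -/

import Mathlib

/-- A commutative ring is isoartinian if every descending chain of ideals terminates
up to `R`-module isomorphism. -/
def IsoArtinian (R : Type*) [CommRing R] : Prop :=
  ∀ f : ℕ → Ideal R, (∀ n, f (n + 1) ≤ f n) →
    ∃ n, ∀ m, n ≤ m → Nonempty ((f m : Submodule R R) ≃ₗ[R] (f n : Submodule R R))

open Ideal

/-- Multiplication by `r` maps an ideal `J` onto `span {r} * J`. -/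
lemma map_mulLeft_eq {R : Type*} [CommRing R] (r : R) (J : Ideal R) :
    Submodule.map (LinearMap.mulLeft R r) J = Ideal.span {r} * J := by
  apply le_antisymm
  · rintro x ⟨j, hj, rfl⟩
    exact Ideal.mul_mem_mul (Ideal.mem_span_singleton_self r) hj
  · rw [Ideal.mul_le]
    intro m hm n hn
    rw [Ideal.mem_span_singleton'] at hm
    obtain ⟨c, rfl⟩ := hm
    exact ⟨c * n, J.mul_mem_left c hn, by simp [LinearMap.mulLeft_apply]; ring⟩

/-- For a regular element `r`, an ideal `J` is isomorphic to `span {r} * J`. -/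
noncomputable def mulRegularEquiv {R : Type*} [CommRing R] (r : R)
    (hr : r ∈ nonZeroDivisors R) (J : Ideal R) :
    (J : Submodule R R) ≃ₗ[R] ((Ideal.span {r} * J : Ideal R) : Submodule R R) :=
  (Submodule.equivMapOfInjective (LinearMap.mulLeft R r)
    (fun a b hab => by
      simp only [LinearMap.mulLeft_apply] at hab
      have h0 : (a - b) * r = 0 := by
        rw [sub_mul, mul_comm a r, mul_comm b r, hab, sub_self]
      have := mem_nonZeroDivisors_iff_right.mp hr _ h0
      exact sub_eq_zero.mp this) J).trans
    (LinearEquiv.ofEq _ _ (map_mulLeft_eq r J))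

/-- In an isoartinian commutative ring, every regular ideal is principal and generated
by a regular element. -/
theorem stmt4 {R : Type*} [CommRing R] (h : IsoArtinian R) :
    ∀ I : Ideal R, (∃ z ∈ I, z ∈ nonZeroDivisors R) →
      ∃ z ∈ nonZeroDivisors R, I = Ideal.span {z} := by
  rintro I ⟨z, hzI, hz⟩
  set f : ℕ → Ideal R := fun n => Ideal.span {z ^ ((n + 1) / 2)} * (if Even n then I else ⊤)
    with hf
  have hmono : ∀ n, f (n + 1) ≤ f n := by
    intro n
    rcases Nat.even_or_odd n with he | ho
    · obtain ⟨k, rfl⟩ := he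
      have h1 : (k + k + 1 + 1) / 2 = k + 1 := by omega
      have h2 : (k + k + 1) / 2 = k := by omega
      have hne : ¬ Even (k + k + 1) := by simp [Nat.even_add_one]
      have hi1 : (if Even (k + k) then I else (⊤ : Ideal R)) = I := if_pos ⟨k, rfl⟩
      have hi2 : (if Even (k + k + 1) then I else (⊤ : Ideal R)) = ⊤ := if_neg hne
      simp only [hf, h1, h2, hi1, hi2]
      rw [Ideal.mul_top, Ideal.span_le]
      intro x hx
      simp only [Set.mem_singleton_iff] at hx
      subst hx
      rw [pow_succ]
      exact Ideal.mul_mem_mul (Ideal.mem_span_singleton_self _) hzI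
    · obtain ⟨k, rfl⟩ := ho
      have h1 : (2 * k + 1 + 1 + 1) / 2 = k + 1 := by omega
      have h2 : (2 * k + 1 + 1) / 2 = k + 1 := by omega
      have hne : ¬ Even (2 * k + 1) := by simp [Nat.even_add_one]
      have heven : Even (2 * k + 1 + 1) := by simp [Nat.even_add_one, hne]
      have hi1 : (if Even (2 * k + 1) then I else (⊤ : Ideal R)) = ⊤ := if_neg hne
      have hi2 : (if Even (2 * k + 1 + 1) then I else (⊤ : Ideal R)) = I := if_pos heven
      simp only [hf, h1, h2, hi1, hi2]
      exact Ideal.mul_mono_right le_top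
  obtain ⟨n, hn⟩ := h f hmono
  have e1 : f (2 * n) = Ideal.span {z ^ n} * I := by
    have hd : (2 * n + 1) / 2 = n := by omega
    have hi : (if Even (2 * n) then I else (⊤ : Ideal R)) = I := if_pos (even_two_mul n)
    simp only [hf, hd, hi]
  have e2 : f (2 * n + 1) = Ideal.span {z ^ (n + 1)} * ⊤ := by
    have hd : (2 * n + 1 + 1) / 2 = n + 1 := by omega
    have hne : ¬ Even (2 * n + 1) := by simp [Nat.even_add_one]
    have hi : (if Even (2 * n + 1) then I else (⊤ : Ideal R)) = ⊤ := if_neg hne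
    simp only [hf, hd, hi]
  have h1 := hn (2 * n) (by omega)
  have h2 := hn (2 * n + 1) (by omega)
  rw [e1] at h1
  rw [e2] at h2
  obtain ⟨g1⟩ := h1
  obtain ⟨g2⟩ := h2
  have E : (I : Submodule R R) ≃ₗ[R] R :=
    (mulRegularEquiv (z ^ n) (pow_mem hz n) I).trans <|
      g1.trans <| g2.symm.trans <|
        (mulRegularEquiv (z ^ (n + 1)) (pow_mem hz (n + 1)) ⊤).symm.trans
          Submodule.topEquiv
  set E' := E.symm with hE'
  set z₀ : R := (E' 1 : R) with hz₀
  have key : ∀ a : R, (E' a : R) = a * z₀ := by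
    intro a
    have : E' a = a • E' 1 := by rw [← map_smul, smul_eq_mul, mul_one]
    rw [this]
    rfl
  refine ⟨z₀, ?_, ?_⟩
  · rw [mem_nonZeroDivisors_iff_right]
    intro a ha
    have h0 : E' a = 0 := by
      apply Subtype.ext
      rw [key a]
      exact ha
    rw [← map_zero E'] at h0
    exact E'.injective h0
  · apply le_antisymm
    · intro x hx
      have hxI : (⟨x, hx⟩ : I) = E' (E ⟨x, hx⟩) := by simp [hE']
      rw [Ideal.mem_span_singleton']
      refine ⟨E ⟨x, hx⟩, ?_⟩
      have := key (E ⟨x, hx⟩)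
      rw [← this, ← hxI]
    · rw [Ideal.span_le]
      intro x hx
      simp only [Set.mem_singleton_iff] at hx
      subst hx
      exact (E' 1).2
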